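/- Let T be a string with suffix array SA, let P occur in T with suffix range [ℓ, r), and let B be a nonempty string with suffix range [lb, rb). Define g(i) = ISA[SA[i] + |P|] when SA[i] + |P| < |T|. Then the predicate 'SA[i] + |P| = |T| or g(i) < lb' is monotone (downward-closed) on [ℓ, r): if it holds for some i ∈ [ℓ, r) it holds for all j ∈ [ℓ, i]. Hence the first index of the suffix range of P∘B within [ℓ, r) can be characterized as the least i ∈ [ℓ, r) failing this predicate. -/

import Mathlib

private lemma lex_strip {α : Type*} [LinearOrder α] :
    ∀ (P a b : List α), List.Lex (· < ·) (P ++ a) (P ++ b) → List.Lex (· < ·) a b := by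
  intro P
  induction P with
  | nil => exact fun a b h => h
  | cons x P ih =>
    intro a b h
    rw [List.cons_append, List.cons_append, List.lex_cons_iff] at h
    exact ih a b h

theorem stmt15 {α : Type*} [LinearOrder α] (T P B : List α) (hB : B ≠ [])
    (SA : Equiv.Perm (Fin T.length))
    (hsorted : ∀ i j : Fin T.length, i < j →
      List.Lex (· < ·) (T.drop (SA i).val) (T.drop (SA j).val))
    (ℓ r lb rb : ℕ)
    (hrangeP : ∀ i : Fin T.length,
      (P <+: T.drop (SA i).val) ↔ (ℓ ≤ i.val ∧ i.val < r))
    (hrangeB : ∀ i : Fin T.length,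
      (B <+: T.drop (SA i).val) ↔ (lb ≤ i.val ∧ i.val < rb)) :
    (∀ i j : Fin T.length, ℓ ≤ j.val → j ≤ i → i.val < r →
      ((SA i).val + P.length = T.length ∨
        ∃ h : (SA i).val + P.length < T.length,
          (SA.symm ⟨(SA i).val + P.length, h⟩).val < lb) →
      ((SA j).val + P.length = T.length ∨
        ∃ h : (SA j).val + P.length < T.length,
          (SA.symm ⟨(SA j).val + P.length, h⟩).val < lb)) ∧
    (∀ i : Fin T.length, ((P ++ B) <+: T.drop (SA i).val) →
      (∀ j : Fin T.length, ((P ++ B) <+: T.drop (SA j).val) → i ≤ j) →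
      ℓ ≤ i.val ∧ i.val < r ∧
      ¬ ((SA i).val + P.length = T.length ∨
          ∃ h : (SA i).val + P.length < T.length,
            (SA.symm ⟨(SA i).val + P.length, h⟩).val < lb) ∧
      ∀ j : Fin T.length, ℓ ≤ j.val → j.val < i.val →
        ((SA j).val + P.length = T.length ∨
          ∃ h : (SA j).val + P.length < T.length,
            (SA.symm ⟨(SA j).val + P.length, h⟩).val < lb)) := by
  -- suffix decomposition
  have key : ∀ i : Fin T.length, P <+: T.drop (SA i).val →
      T.drop (SA i).val = P ++ T.drop ((SA i).val + P.length) := by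
    intro i hp
    have h1 : T.drop ((SA i).val + P.length) = (T.drop (SA i).val).drop P.length := by
      rw [List.drop_drop, Nat.add_comm]
    rw [h1]
    conv_lhs => rw [← List.take_append_drop P.length (T.drop (SA i).val)]
    rw [← List.prefix_iff_eq_take.mp hp]
  have hlen : ∀ i : Fin T.length, P <+: T.drop (SA i).val →
      (SA i).val + P.length ≤ T.length := by
    intro i hp
    have h1 := hp.length_le
    rw [List.length_drop] at h1
    have h2 := (SA i).isLt
    omega
  have idx_lt : ∀ a b : Fin T.length,
      List.Lex (· < ·) (T.drop (SA a).val) (T.drop (SA b).val) → a < b := by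
    intro a b h
    by_contra hc
    push_neg at hc
    rcases eq_or_lt_of_le hc with he | hl
    · rw [he] at h; exact asymm h h
    · exact asymm h (hsorted b a hl)
  constructor
  · intro i j hℓj hji hir hQ
    rcases lt_or_eq_of_le hji with hlt | heq
    · have hPi : P <+: T.drop (SA i).val :=
        (hrangeP i).2 ⟨le_trans hℓj (le_of_lt hlt), hir⟩
      have hPj : P <+: T.drop (SA j).val :=
        (hrangeP j).2 ⟨hℓj, lt_trans hlt hir⟩
      have hlex := hsorted j i hlt
      rw [key i hPi, key j hPj] at hlex
      have hst := lex_strip P _ _ hlex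
      rcases hQ with hQ | ⟨h, hg⟩
      · rw [hQ, List.drop_length] at hst
        exact absurd hst (fun h => nomatch (show ∀ l : List α, ¬ List.Lex (· < ·) l [] from fun l h' => by cases h') _ h)
      · have hle : (SA j).val + P.length ≤ T.length := hlen j hPj
        rcases eq_or_lt_of_le hle with he | hl
        · exact Or.inl he
        · refine Or.inr ⟨hl, ?_⟩
          have hji' : SA.symm ⟨(SA j).val + P.length, hl⟩ <
              SA.symm ⟨(SA i).val + P.length, h⟩ := by
            apply idx_lt
            simpa [Equiv.apply_symm_apply] using hst
          have : (SA.symm ⟨(SA j).val + P.length, hl⟩).val <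
              (SA.symm ⟨(SA i).val + P.length, h⟩).val := hji'
          omega
    · rw [heq]; exact hQ
  · intro i hPB hmin
    have hPi : P <+: T.drop (SA i).val := (P.prefix_append B).trans hPB
    obtain ⟨hℓi, hir⟩ := (hrangeP i).1 hPi
    have hBlen : 1 ≤ B.length := by
      cases B with
      | nil => exact absurd rfl hB
      | cons x xs => simp
    have hlti : (SA i).val + P.length < T.length := by
      have h1 := hPB.length_le
      rw [List.length_drop, List.length_append] at h1
      have h2 := (SA i).isLt
      omega
    -- B is a prefix of the remainder of i
    have hBi : B <+: T.drop ((SA i).val + P.length) := by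
      obtain ⟨t, ht⟩ := hPB
      refine ⟨t, ?_⟩
      have h1 : T.drop ((SA i).val + P.length) = (T.drop (SA i).val).drop P.length := by
        rw [List.drop_drop, Nat.add_comm]
      rw [h1, ← ht, List.append_assoc, List.drop_left]
    set gi := SA.symm ⟨(SA i).val + P.length, hlti⟩ with hgi
    have hgiB : lb ≤ gi.val ∧ gi.val < rb := by
      apply (hrangeB gi).1
      simpa [hgi, Equiv.apply_symm_apply] using hBi
    refine ⟨hℓi, hir, ?_, ?_⟩
    · rintro (hQ | ⟨h, hg⟩)
      · omega
      · have : (SA.symm ⟨(SA i).val + P.length, h⟩).val = gi.val := rfl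
        omega
    · intro j hℓj hji
      have hPj : P <+: T.drop (SA j).val := (hrangeP j).2 ⟨hℓj, lt_trans hji hir⟩
      have hle : (SA j).val + P.length ≤ T.length := hlen j hPj
      rcases eq_or_lt_of_le hle with he | hl
      · exact Or.inl he
      · refine Or.inr ⟨hl, ?_⟩
        set gj := SA.symm ⟨(SA j).val + P.length, hl⟩ with hgj
        have hlex := hsorted j i hji
        rw [key i hPi, key j hPj] at hlex
        have hst := lex_strip P _ _ hlex
        have hji' : gj < gi := by
          apply idx_lt
          simpa [hgj, hgi, Equiv.apply_symm_apply] using hst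
        have hgj_lt_gi : gj.val < gi.val := hji'
        by_contra hc
        push_neg at hc
        -- then B is a prefix of the remainder of j, so P++B prefixes suffix j
        have hBj : B <+: T.drop ((SA j).val + P.length) := by
          have := (hrangeB gj).2 ⟨hc, by omega⟩
          simpa [hgj, Equiv.apply_symm_apply] using this
        obtain ⟨u, hu⟩ := hBj
        have hPBj : (P ++ B) <+: T.drop (SA j).val :=
          ⟨u, by rw [List.append_assoc, hu, ← key j hPj]⟩
        have := hmin j hPBj
        have : i.val ≤ j.val := this
        omega
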